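/- Let S = F_2[X]/(X²+1) with i the class of X, and let T = S[Y]/(Y²+Y+1) with ω the class of Y (so T ≅ F_4[i] = M_2-quotient alphabet base ring). For a, b, c, d ∈ S, if exactly one of the two elements a + bω and c + dω is a unit of T (i.e., one is invertible and the other is not), then the matrix [[a+d, b+c],[b+c+d, a+b+d]] is invertible in M_2(S). -/

import Mathlib

open Matrix Polynomial

/-- The ring `S = 𝔽₂[i] = 𝔽₂[X]/(X²+1)`. -/
noncomputable abbrev F2adjI : Type := AdjoinRoot (X ^ 2 + 1 : Polynomial (ZMod 2))

/-- The ring `T = S[Y]/(Y²+Y+1) ≅ 𝔽₄[i]`. -/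
noncomputable abbrev F4adjI' : Type := AdjoinRoot (X ^ 2 + X + 1 : Polynomial F2adjI)

lemma two_poly : (2 : (ZMod 2)[X]) = 0 := by
  have h : (2 : (ZMod 2)[X]) = Polynomial.C (2 : ZMod 2) := by rw [map_ofNat]
  rw [h, show (2:ZMod 2) = 0 by decide, map_zero]

lemma two_S : (2 : F2adjI) = 0 := by
  have : (2 : F2adjI) = AdjoinRoot.mk _ (2 : (ZMod 2)[X]) := (map_ofNat _ 2).symm
  rw [this, two_poly, map_zero]

instance : Nontrivial F2adjI := AdjoinRoot.nontrivial _ (by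
  rw [show (X ^ 2 + 1 : (ZMod 2)[X]).degree = 2 by compute_degree!]
  decide)

lemma monic_p : Monic (X ^ 2 + X + 1 : Polynomial F2adjI) := by monicity!

lemma degree_p : (X ^ 2 + X + 1 : Polynomial F2adjI).degree = 2 := by compute_degree!

instance : Nontrivial F4adjI' := by
  refine nontrivial_of_ne 1 0 ?_
  have h1 : (1 : F4adjI') = AdjoinRoot.mk _ (1 : (Polynomial F2adjI)) := rfl
  rw [h1]
  exact AdjoinRoot.mk_ne_zero_of_degree_lt monic_p one_ne_zero
    (by rw [degree_p, degree_one]; decide)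

lemma two_T : (2 : F4adjI') = 0 := by
  have : (2 : F4adjI') = algebraMap F2adjI F4adjI' 2 := (map_ofNat _ 2).symm
  rw [this, two_S, map_zero]

lemma omega_sq : (AdjoinRoot.root (X ^ 2 + X + 1 : Polynomial F2adjI)) ^ 2
    = AdjoinRoot.root (X ^ 2 + X + 1 : Polynomial F2adjI) + 1 := by
  have h : (AdjoinRoot.mk (X ^ 2 + X + 1 : Polynomial F2adjI)) (X ^ 2 + X + 1) = 0 :=
    AdjoinRoot.mk_self
  simp only [map_add, map_pow, AdjoinRoot.mk_X, _root_.map_one] at h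
  linear_combination h - (AdjoinRoot.root (X ^ 2 + X + 1 : Polynomial F2adjI) + 1) * two_T

/-- Every element of `S` squares to `0` or `1`. -/
lemma sq_S (n : F2adjI) : n ^ 2 = 0 ∨ n ^ 2 = 1 := by
  induction n using AdjoinRoot.induction_on with
  | ih q =>
    set e := q.eval 1 with hee
    have he : e = 0 ∨ e = 1 := by
      have : ∀ e : ZMod 2, e = 0 ∨ e = 1 := by decide
      exact this _
    have hdvd : (X - C (1:ZMod 2)) ∣ (q - C e) := by
      rw [Polynomial.dvd_iff_isRoot]
      simp [Polynomial.IsRoot, hee]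
    obtain ⟨r, hr⟩ := hdvd
    rw [C_1] at hr
    have hq : q = C e + (X - 1) * r := by linear_combination hr
    have hsq : ((X - 1) * r : (ZMod 2)[X]) ^ 2 = (X ^ 2 + 1) * r ^ 2 := by
      linear_combination (-(r ^ 2 * X)) * two_poly
    have hz : (AdjoinRoot.mk (X ^ 2 + 1 : (ZMod 2)[X])) ((X - 1) * r) ^ 2 = 0 := by
      rw [← map_pow, hsq, _root_.map_mul, AdjoinRoot.mk_self, zero_mul]
    have key : (AdjoinRoot.mk (X ^ 2 + 1 : (ZMod 2)[X])) q ^ 2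
        = (AdjoinRoot.mk _ (C e)) ^ 2 := by
      rw [hq]
      simp only [map_add]
      linear_combination hz + ((AdjoinRoot.mk (X ^ 2 + 1 : (ZMod 2)[X])) (C e)
        * (AdjoinRoot.mk (X ^ 2 + 1 : (ZMod 2)[X])) ((X - 1) * r)) * two_S
    rcases he with he | he <;> rw [key, he]
    · left; simp
    · right; simp

/-- The conjugate identity: `(x + yω)(x + y + yω) = N(x + yω)` in `T`. -/
lemma conjMulNorm (x y : F2adjI) :
    (algebraMap F2adjI F4adjI' x + algebraMap F2adjI F4adjI' y *
        AdjoinRoot.root (X ^ 2 + X + 1 : Polynomial F2adjI)) *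
      (algebraMap F2adjI F4adjI' (x + y) + algebraMap F2adjI F4adjI' y *
        AdjoinRoot.root (X ^ 2 + X + 1 : Polynomial F2adjI))
    = algebraMap F2adjI F4adjI' (x ^ 2 + x * y + y ^ 2) := by
  simp only [map_add, _root_.map_mul, map_pow]
  linear_combination (algebraMap F2adjI F4adjI' y) ^ 2 * omega_sq +
    ((algebraMap F2adjI F4adjI' x * algebraMap F2adjI F4adjI' y +
      algebraMap F2adjI F4adjI' y ^ 2) *
      AdjoinRoot.root (X ^ 2 + X + 1 : Polynomial F2adjI)) * two_T

/-- If `x + yω` is not a unit of `T`, then `N(x,y)² = 0`. -/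
lemma norm_sq_zero_of_not_unit (x y : F2adjI)
    (h : ¬ IsUnit (algebraMap F2adjI F4adjI' x + algebraMap F2adjI F4adjI' y *
        AdjoinRoot.root (X ^ 2 + X + 1 : Polynomial F2adjI))) :
    (x ^ 2 + x * y + y ^ 2) ^ 2 = 0 := by
  rcases sq_S (x ^ 2 + x * y + y ^ 2) with h0 | h1
  · exact h0
  · exfalso
    apply h
    have hu : IsUnit (x ^ 2 + x * y + y ^ 2) :=
      IsUnit.of_mul_eq_one _ (by rw [← sq]; exact h1)
    have : IsUnit (algebraMap F2adjI F4adjI' (x ^ 2 + x * y + y ^ 2)) := hu.map _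
    rw [← conjMulNorm] at this
    exact isUnit_of_mul_isUnit_left this

/-- If `x + yω` is a unit of `T`, then `N(x,y)² = 1`. -/
lemma norm_sq_one_of_unit (x y : F2adjI)
    (h : IsUnit (algebraMap F2adjI F4adjI' x + algebraMap F2adjI F4adjI' y *
        AdjoinRoot.root (X ^ 2 + X + 1 : Polynomial F2adjI))) :
    (x ^ 2 + x * y + y ^ 2) ^ 2 = 1 := by
  rcases sq_S (x ^ 2 + x * y + y ^ 2) with h0 | h1
  · exfalso
    have hN : (x ^ 2 + x * y + y ^ 2) ^ 2 = (x^2)^2 + (x^2) * (y^2) + (y^2)^2 := by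
      linear_combination (x^3*y + x^2*y^2 + x*y^3) * two_S
    rcases sq_S x with hx | hx <;> rcases sq_S y with hy | hy
    · -- x² = 0, y² = 0 : the element itself squares to zero, contradicting unit
      have hx' : algebraMap F2adjI F4adjI' x ^ 2 = 0 := by
        rw [← map_pow, hx, map_zero]
      have hy' : algebraMap F2adjI F4adjI' y ^ 2 = 0 := by
        rw [← map_pow, hy, map_zero]
      have hsq : (algebraMap F2adjI F4adjI' x + algebraMap F2adjI F4adjI' y *
          AdjoinRoot.root (X ^ 2 + X + 1 : Polynomial F2adjI)) ^ 2 = 0 := by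
        linear_combination hx' +
          (AdjoinRoot.root (X ^ 2 + X + 1 : Polynomial F2adjI)) ^ 2 * hy' +
          (algebraMap F2adjI F4adjI' x * algebraMap F2adjI F4adjI' y *
            AdjoinRoot.root (X ^ 2 + X + 1 : Polynomial F2adjI)) * two_T
      have : IsUnit ((algebraMap F2adjI F4adjI' x + algebraMap F2adjI F4adjI' y *
          AdjoinRoot.root (X ^ 2 + X + 1 : Polynomial F2adjI)) ^ 2) := h.pow 2
      rw [hsq, isUnit_zero_iff] at this
      exact zero_ne_one this
    · exfalso
      have h1 : (x ^ 2 + x * y + y ^ 2) ^ 2 = 1 := by rw [hN, hx, hy]; norm_num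
      rw [h1] at h0; exact one_ne_zero h0
    · exfalso
      have h1 : (x ^ 2 + x * y + y ^ 2) ^ 2 = 1 := by rw [hN, hx, hy]; norm_num
      rw [h1] at h0; exact one_ne_zero h0
    · exfalso
      have h1 : (x ^ 2 + x * y + y ^ 2) ^ 2 = 1 := by
        rw [hN, hx, hy]; linear_combination two_S
      rw [h1] at h0; exact one_ne_zero h0
  · exact h1

/-- if exactly one of `a + bω`, `c + dω` is a unit of `T = 𝔽₄[i]`, then the
matrix `[[a+d, b+c],[b+c+d, a+b+d]]` is invertible in `M₂(S)`, `S = 𝔽₂[i]`. -/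
theorem stmt_12 (a b c d : F2adjI)
    (h : (IsUnit (algebraMap F2adjI F4adjI' a + algebraMap F2adjI F4adjI' b *
            AdjoinRoot.root (X ^ 2 + X + 1 : Polynomial F2adjI)) ∧
          ¬IsUnit (algebraMap F2adjI F4adjI' c + algebraMap F2adjI F4adjI' d *
            AdjoinRoot.root (X ^ 2 + X + 1 : Polynomial F2adjI))) ∨
         (¬IsUnit (algebraMap F2adjI F4adjI' a + algebraMap F2adjI F4adjI' b *
            AdjoinRoot.root (X ^ 2 + X + 1 : Polynomial F2adjI)) ∧
          IsUnit (algebraMap F2adjI F4adjI' c + algebraMap F2adjI F4adjI' d *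
            AdjoinRoot.root (X ^ 2 + X + 1 : Polynomial F2adjI)))) :
    IsUnit (!![a + d, b + c; b + c + d, a + b + d] : Matrix (Fin 2) (Fin 2) F2adjI) := by
  rw [Matrix.isUnit_iff_isUnit_det, Matrix.det_fin_two_of]
  have hdet : (a + d) * (a + b + d) - (b + c) * (b + c + d)
      = (a ^ 2 + a * b + b ^ 2) + (c ^ 2 + c * d + d ^ 2) := by
    linear_combination (a * d - b ^ 2 - b * c - c ^ 2 - c * d) * two_S
  rw [hdet]
  have hsq : ((a ^ 2 + a * b + b ^ 2) + (c ^ 2 + c * d + d ^ 2)) ^ 2 = 1 := by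
    have hexp : ((a ^ 2 + a * b + b ^ 2) + (c ^ 2 + c * d + d ^ 2)) ^ 2
        = (a ^ 2 + a * b + b ^ 2) ^ 2 + (c ^ 2 + c * d + d ^ 2) ^ 2 := by
      linear_combination ((a ^ 2 + a * b + b ^ 2) * (c ^ 2 + c * d + d ^ 2)) * two_S
    rcases h with ⟨hu, hv⟩ | ⟨hv, hu⟩
    · rw [hexp, norm_sq_one_of_unit a b hu, norm_sq_zero_of_not_unit c d hv, add_zero]
    · rw [hexp, norm_sq_zero_of_not_unit a b hv, norm_sq_one_of_unit c d hu, zero_add]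
  exact IsUnit.of_mul_eq_one _ (by rw [← sq]; exact hsq)
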